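/- Let 0 < p < 2 and q := 2p/(2-p). Let ι be a countable index set, (β_s)_{s∈ι} positive reals, (w_s)_{s∈ι} reals with w_s ≥ 1, and M > 0 such that Σ_{s∈ι} (w_s^{q/p} β_s)^p ≤ M. Define σ_s := β_s^{p/2 - 1}. Then for every family (a_s)_{s∈ι} with 0 ≤ a_s ≤ β_s one has Σ_{s∈ι} (σ_s a_s)² ≤ M and Σ_{s∈ι} (w_s σ_s^{-1})^q ≤ M. -/

import Mathlib

/-- Construction of weights turning `ℓ_p`-summability into weighted `ℓ_2`-summability:
with `q = 2p/(2-p)` and `Σ (w_s^{q/p} β_s)^p ≤ M`, the weights `σ_s := β_s^{p/2-1}`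
satisfy `Σ (σ_s a_s)² ≤ M` for any `0 ≤ a_s ≤ β_s`, together with
`Σ (w_s σ_s^{-1})^q ≤ M`. -/
theorem weighted_l2_from_lp (p M : ℝ) (hp0 : 0 < p) (hp2 : p < 2) (hM : 0 < M)
    {ι : Type*} [Countable ι] (β w : ι → ℝ) (hβ : ∀ s, 0 < β s) (hw : ∀ s, 1 ≤ w s)
    (hsum : Summable fun s => (w s ^ ((2 * p / (2 - p)) / p) * β s) ^ p)
    (hsum' : ∑' s, (w s ^ ((2 * p / (2 - p)) / p) * β s) ^ p ≤ M)
    (a : ι → ℝ) (ha0 : ∀ s, 0 ≤ a s) (haβ : ∀ s, a s ≤ β s) :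
    (Summable fun s => (β s ^ (p / 2 - 1) * a s) ^ 2) ∧
    (∑' s, (β s ^ (p / 2 - 1) * a s) ^ 2 ≤ M) ∧
    (Summable fun s => (w s * (β s ^ (p / 2 - 1))⁻¹) ^ (2 * p / (2 - p))) ∧
    (∑' s, (w s * (β s ^ (p / 2 - 1))⁻¹) ^ (2 * p / (2 - p)) ≤ M) := by
  set q : ℝ := 2 * p / (2 - p) with hq
  have h2p : (0:ℝ) < 2 - p := by linarith
  have hq0 : 0 < q := by positivity
  have hqp : 0 ≤ q / p := by positivity
  -- termwise bound for the first sum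
  have hle : ∀ s, (β s ^ (p / 2 - 1) * a s) ^ 2 ≤ (w s ^ (q / p) * β s) ^ p := by
    intro s
    have hβs := hβ s
    have hσ : (0:ℝ) ≤ β s ^ (p / 2 - 1) := (Real.rpow_pos_of_pos hβs _).le
    have h1 : (β s ^ (p / 2 - 1) * a s) ^ 2 ≤ (β s ^ (p / 2 - 1) * β s) ^ 2 := by
      apply pow_le_pow_left₀ (mul_nonneg hσ (ha0 s))
      exact mul_le_mul_of_nonneg_left (haβ s) hσ
    have h2 : (β s ^ (p / 2 - 1) * β s) ^ 2 = β s ^ p := by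
      have : β s ^ (p / 2 - 1) * β s = β s ^ (p / 2) := by
        nth_rewrite 2 [← Real.rpow_one (β s)]
        rw [← Real.rpow_add hβs]; ring_nf
      rw [this, sq, ← Real.rpow_add hβs]; ring_nf
    have h3 : β s ^ p ≤ (w s ^ (q / p) * β s) ^ p := by
      apply Real.rpow_le_rpow hβs.le _ hp0.le
      have hw1 : (1:ℝ) ≤ w s ^ (q / p) := Real.one_le_rpow (hw s) hqp
      nlinarith [hβs]
    calc _ ≤ (β s ^ (p / 2 - 1) * β s) ^ 2 := h1
      _ = β s ^ p := h2
      _ ≤ _ := h3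
  have hS1 : Summable fun s => (β s ^ (p / 2 - 1) * a s) ^ 2 :=
    Summable.of_nonneg_of_le (fun s => by positivity) hle hsum
  -- termwise identity for the second sum
  have heq : ∀ s, (w s * (β s ^ (p / 2 - 1))⁻¹) ^ q = (w s ^ (q / p) * β s) ^ p := by
    intro s
    have hβs := hβ s
    have hws : (0:ℝ) < w s := lt_of_lt_of_le one_pos (hw s)
    have hinv : (β s ^ (p / 2 - 1))⁻¹ = β s ^ (1 - p / 2) := by
      rw [← Real.rpow_neg hβs.le]; ring_nf
    rw [hinv, Real.mul_rpow hws.le (Real.rpow_pos_of_pos hβs _).le,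
      Real.mul_rpow (Real.rpow_pos_of_pos hws _).le hβs.le,
      ← Real.rpow_mul hβs.le, ← Real.rpow_mul hws.le]
    have hq1 : (1 - p / 2) * q = p := by
      rw [hq]; field_simp [h2p.ne']
    have hq2 : q / p * p = q := by field_simp
    rw [hq1, hq2]
  refine ⟨hS1, le_trans (Summable.tsum_le_tsum hle hS1 hsum) hsum', ?_, ?_⟩
  · exact hsum.congr fun s => (heq s).symm
  · rw [tsum_congr heq]; exact hsum'
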